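/- Let r ≥ 2 and let s_1 ≤ s_2 ≤ ... ≤ s_r be positive integers. Then there exists a constant C = C(s_1,...,s_r) such that every n-vertex r-uniform hypergraph containing no copy of the complete r-partite r-uniform hypergraph K^{(r)}_{s_1,...,s_r} has at most C · n^{r - 1/(s_1 s_2 ⋯ s_{r-1})} edges. -/

import Mathlib

set_option maxHeartbeats 1000000

open Finset

/-- A `k`-uniform hypergraph `H` contains a copy of the complete `k`-partite
hypergraph with part sizes `sz`: disjoint sets `A i` of sizes `sz i` such that
every transversal `k`-set is an edge. -/
def ContainsCompletePartite {V : Type*} [DecidableEq V]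
    (H : Finset (Finset V)) {k : ℕ} (sz : Fin k → ℕ) : Prop :=
  ∃ A : Fin k → Finset V, (∀ i j, i ≠ j → Disjoint (A i) (A j)) ∧
    (∀ i, (A i).card = sz i) ∧
    ∀ g : Fin k → V, (∀ i, g i ∈ A i) → Finset.image g Finset.univ ∈ H


lemma aux_pow_le_choose (d k : ℕ) : d ^ k ≤ 2^k * (k.factorial * d.choose k) + (2*k)^k := by
  rcases le_or_gt d (2*k) with h | h
  · exact le_add_left (Nat.pow_le_pow_left h k)
  · have h1 : d ≤ 2 * (d - k) := by omega
    calc d ^ k ≤ (2 * (d - k)) ^ k := Nat.pow_le_pow_left h1 k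
    _ = 2^k * (d-k)^k := by rw [mul_pow]
    _ ≤ 2^k * d.descFactorial k :=
        Nat.mul_le_mul_left _ (le_trans (Nat.pow_le_pow_left (by omega) k)
          (Nat.pow_sub_le_descFactorial d k))
    _ = 2^k * (k.factorial * d.choose k) := by rw [Nat.descFactorial_eq_factorial_mul_choose]
    _ ≤ _ := Nat.le_add_right _ _

lemma aux_double {α : Type*} [DecidableEq α] [Fintype α] (N : Finset α → Finset α)
    (Mset : Finset (Finset α)) (k : ℕ) :
    ∑ S ∈ Finset.univ.powersetCard k, (Mset.filter (fun f => S ⊆ N f)).card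
      = ∑ f ∈ Mset, ((N f).card.choose k) := by
  have : ∀ f, ((Finset.univ.powersetCard k).filter (fun S => S ⊆ N f)) = (N f).powersetCard k := by
    intro f
    ext S
    simp [Finset.mem_powersetCard, Finset.mem_filter]
    tauto
  calc ∑ S ∈ Finset.univ.powersetCard k, (Mset.filter (fun f => S ⊆ N f)).card
      = ∑ S ∈ Finset.univ.powersetCard k, ∑ f ∈ Mset, if S ⊆ N f then 1 else 0 := by
        simp only [Finset.card_filter]
    _ = ∑ f ∈ Mset, ∑ S ∈ Finset.univ.powersetCard k, if S ⊆ N f then 1 else 0 :=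
        Finset.sum_comm
    _ = ∑ f ∈ Mset, ((Finset.univ.powersetCard k).filter (fun S => S ⊆ N f)).card := by
        simp only [Finset.card_filter]
    _ = _ := by
        refine Finset.sum_congr rfl fun f _ => ?_
        rw [this f, Finset.card_powersetCard]


lemma aux_degree_sum {n r : ℕ} (H : Finset (Finset (Fin n)))
    (huni : ∀ e ∈ H, e.card = r + 1) :
    ∑ f ∈ Finset.univ.powersetCard r,
        (Finset.univ.filter (fun v => v ∉ f ∧ insert v f ∈ H)).card = (r+1) * H.card := by
  have key : ∀ v : Fin n,
      ((Finset.univ.powersetCard r).filter (fun f => v ∉ f ∧ insert v f ∈ H)).card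
        = (H.filter (fun e => v ∈ e)).card := by
    intro v
    refine Finset.card_bij (fun f _ => insert v f) ?_ ?_ ?_
    · intro f hf
      simp only [Finset.mem_filter, Finset.mem_powersetCard] at hf ⊢
      exact ⟨hf.2.2, Finset.mem_insert_self v f⟩
    · intro f hf g hg hfg
      simp only [Finset.mem_filter, Finset.mem_powersetCard] at hf hg
      have := congrArg (fun s => Finset.erase s v) hfg
      simpa [Finset.erase_insert hf.2.1, Finset.erase_insert hg.2.1] using this
    · intro e he
      simp only [Finset.mem_filter] at he
      refine ⟨e.erase v, ?_, ?_⟩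
      · simp only [Finset.mem_filter, Finset.mem_powersetCard]
        refine ⟨⟨Finset.subset_univ _, ?_⟩, Finset.notMem_erase v e, ?_⟩
        · rw [Finset.card_erase_of_mem he.2, huni e he.1]; rfl
        · rw [Finset.insert_erase he.2]; exact he.1
      · simp only [Finset.insert_erase he.2]
  calc ∑ f ∈ Finset.univ.powersetCard r,
        (Finset.univ.filter (fun v => v ∉ f ∧ insert v f ∈ H)).card
      = ∑ f ∈ Finset.univ.powersetCard r, ∑ v : Fin n,
          if v ∉ f ∧ insert v f ∈ H then 1 else 0 := by
        simp only [Finset.card_filter]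
    _ = ∑ v : Fin n, ∑ f ∈ Finset.univ.powersetCard r,
          if v ∉ f ∧ insert v f ∈ H then 1 else 0 := Finset.sum_comm
    _ = ∑ v : Fin n,
          ((Finset.univ.powersetCard r).filter (fun f => v ∉ f ∧ insert v f ∈ H)).card := by
        simp only [Finset.card_filter]
    _ = ∑ v : Fin n, (H.filter (fun e => v ∈ e)).card := by
        exact Finset.sum_congr rfl fun v _ => key v
    _ = ∑ v : Fin n, ∑ e ∈ H, if v ∈ e then 1 else 0 := by
        simp only [Finset.card_filter]
    _ = ∑ e ∈ H, ∑ v : Fin n, if v ∈ e then 1 else 0 := Finset.sum_comm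
    _ = ∑ e ∈ H, e.card := by
        refine Finset.sum_congr rfl fun e _ => ?_
        simp [Finset.card_filter, Finset.filter_univ_mem]
    _ = (r+1) * H.card := by
        rw [Finset.sum_congr rfl huni, Finset.sum_const, smul_eq_mul, mul_comm]


/-- common neighborhood of `f`. -/
def Nbr {n : ℕ} (H : Finset (Finset (Fin n))) (f : Finset (Fin n)) : Finset (Fin n) :=
  Finset.univ.filter (fun v => v ∉ f ∧ insert v f ∈ H)

lemma aux_free {n r : ℕ} (H : Finset (Finset (Fin n))) (s : Fin (r + 2) → ℕ)
    (hs : ∀ i, 0 < s i) (hfree : ¬ ContainsCompletePartite H s)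
    (S : Finset (Fin n)) (hScard : S.card = s 0) :
    ¬ ContainsCompletePartite
      (((Finset.univ : Finset (Fin n)).powersetCard (r + 1)).filter (fun f => S ⊆ Nbr H f))
      (fun i => s i.succ) := by
  rintro ⟨A, hdisj, hcard, htrans⟩
  have hne : ∀ i, (A i).Nonempty := fun i =>
    Finset.card_pos.mp (by rw [hcard i]; exact hs _)
  have hSdisj : ∀ i, Disjoint S (A i) := by
    intro i
    rw [Finset.disjoint_left]
    intro x hxS hxA
    classical
    have hgmem : ∀ j, (fun j => if h : j = i then x else (hne j).choose) j ∈ A j := by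
      intro j
      by_cases h : j = i
      · subst h; simpa using hxA
      · simpa [h] using (hne j).choose_spec
    have hf := htrans _ hgmem
    have hsub : S ⊆ Nbr H _ := (Finset.mem_filter.mp hf).2
    have hmem := hsub hxS
    rw [Nbr, Finset.mem_filter] at hmem
    exact hmem.2.1 (Finset.mem_image.mpr ⟨i, Finset.mem_univ i, by simp⟩)
  apply hfree
  refine ⟨Fin.cases S A, ?_, ?_, ?_⟩
  · intro i j hij
    induction i using Fin.cases with
    | zero =>
      induction j using Fin.cases with
      | zero => exact absurd rfl hij
      | succ j => simpa using hSdisj j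
    | succ i =>
      induction j using Fin.cases with
      | zero => simpa using (hSdisj i).symm
      | succ j => simpa using hdisj i j (fun h => hij (by rw [h]))
  · intro i
    induction i using Fin.cases with
    | zero => simpa using hScard
    | succ i => simpa using hcard i
  · intro g hg
    have hg' : ∀ i : Fin (r + 1), (g ∘ Fin.succ) i ∈ A i := fun i => by
      simpa using hg i.succ
    have hf := htrans _ hg'
    have hsub : S ⊆ Nbr H _ := (Finset.mem_filter.mp hf).2
    have hg0 : g 0 ∈ S := by simpa using hg 0
    have hmem := hsub hg0
    rw [Nbr, Finset.mem_filter] at hmem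
    have himg : Finset.image g Finset.univ
        = insert (g 0) (Finset.image (g ∘ Fin.succ) Finset.univ) := by
      ext x
      simp only [Finset.mem_image, Finset.mem_insert, Finset.mem_univ, true_and,
        Function.comp, Fin.exists_fin_succ]
      aesop
    rw [himg]
    exact hmem.2.2

lemma aux_degree_sum' {n r : ℕ} (H : Finset (Finset (Fin n)))
    (huni : ∀ e ∈ H, e.card = r + 1) :
    ∑ f ∈ Finset.univ.powersetCard r, (Nbr H f).card = (r+1) * H.card := by
  unfold Nbr
  exact aux_degree_sum H huni

theorem erdos_aux (r : ℕ) : ∀ s : Fin (r + 1) → ℕ, (∀ i, 0 < s i) →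
    ∃ C : ℝ, 0 < C ∧ ∀ n : ℕ, ∀ H : Finset (Finset (Fin n)),
      (∀ e ∈ H, e.card = r + 1) → ¬ ContainsCompletePartite H s →
      (H.card : ℝ) ≤ C * (n : ℝ) ^
        ((r + 1 : ℝ) - 1 / ∏ i : Fin r, (s i.castSucc : ℝ)) := by
  induction r with
  | zero =>
    intro s hs
    refine ⟨s 0, by exact_mod_cast hs 0, fun n H huni hfree => ?_⟩
    have hexp : ((0:ℕ) + 1 : ℝ) - 1 / ∏ i : Fin 0, (s i.castSucc : ℝ) = 0 := by simp
    rw [hexp, Real.rpow_zero, mul_one]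
    -- B : vertices whose singleton is an edge
    set B := Finset.univ.filter (fun v : Fin n => {v} ∈ H) with hB
    have hHB : H ⊆ B.image (fun v => {v}) := by
      intro e he
      obtain ⟨v, rfl⟩ := Finset.card_eq_one.mp (huni e he)
      exact Finset.mem_image.mpr ⟨v, Finset.mem_filter.mpr ⟨Finset.mem_univ v, he⟩, rfl⟩
    have hcard : H.card ≤ B.card := le_trans (Finset.card_le_card hHB) Finset.card_image_le
    have hBlt : B.card < s 0 := by
      by_contra hle
      push_neg at hle
      obtain ⟨A0, hA0B, hA0card⟩ := Finset.exists_subset_card_eq hle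
      exact hfree ⟨fun _ => A0, fun i j hij => absurd (Fin.fin_one_eq_zero i ▸ Fin.fin_one_eq_zero j ▸ rfl) hij,
        fun i => Fin.fin_one_eq_zero i ▸ hA0card, fun g hg => by
          have : Finset.image g Finset.univ = {g 0} := by
            ext x
            simp [Finset.mem_image, Fin.exists_fin_one]
          rw [this]
          exact (Finset.mem_filter.mp (hA0B (hg 0))).2⟩
    exact_mod_cast le_trans hcard hBlt.le
  | succ r IH =>
    intro s hs
    obtain ⟨C', hC'pos, hIH⟩ := IH (fun i => s i.succ) (fun i => hs i.succ)
    obtain ⟨q, hq⟩ : ∃ q, s 0 = q + 1 := ⟨s 0 - 1, by have := hs 0; omega⟩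
    set s₀ := s 0 with hs₀def
    set K1 : ℝ := 2^s₀ * (s₀.factorial : ℝ) * C' with hK1
    set K2 : ℝ := (((2*s₀)^s₀ : ℕ) : ℝ) with hK2
    have hK1pos : 0 < K1 := by positivity
    have hK2nn : 0 ≤ K2 := by positivity
    set C : ℝ := max 1 (K1 + K2) with hC
    have hC1 : (1:ℝ) ≤ C := le_max_left _ _
    refine ⟨C, lt_of_lt_of_le one_pos hC1, fun n H huni hfree => ?_⟩
    -- the exponent
    set t'' : ℝ := ∏ i : Fin r, (s i.castSucc.succ : ℝ) with ht''def
    set T : ℝ := ∏ i : Fin (r+1), (s i.castSucc : ℝ) with hTdef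
    set Y : ℝ := (r + 1 : ℝ) - 1 / t'' with hYdef
    set X : ℝ := (r + 1 + 1 : ℝ) - 1 / T with hXdef
    have ht''1 : (1:ℝ) ≤ t'' := by rw [ht''def]; exact_mod_cast Nat.one_le_cast.mpr (Finset.one_le_prod' fun (i : Fin r) _ => hs i.castSucc.succ)
    have ht''pos : (0:ℝ) < t'' := lt_of_lt_of_le one_pos ht''1
    have hs₀1 : (1:ℝ) ≤ (s₀:ℝ) := by exact_mod_cast hs 0
    have hT : T = (s₀:ℝ) * t'' := by
      rw [hTdef, Fin.prod_univ_succ, ht''def]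
      simp [hs₀def]
    have hTpos : (0:ℝ) < T := by rw [hT]; positivity
    rcases Nat.eq_zero_or_pos H.card with he0 | hepos
    · rw [he0]; push_cast; positivity
    -- n is large enough
    obtain ⟨e₀, he₀⟩ := Finset.card_pos.mp hepos
    have hn : r + 2 ≤ n := by
      have h1 := huni e₀ he₀
      have h2 := Finset.card_le_univ e₀
      simp only [Finset.card_univ, Fintype.card_fin] at h2
      omega
    have hnpos : (0:ℝ) < (n:ℝ) := by exact_mod_cast Nat.lt_of_lt_of_le (by omega) hn
    have hn1 : (1:ℝ) ≤ (n:ℝ) := by exact_mod_cast Nat.one_le_cast.mpr (by omega)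
    -- the neighborhood-hypergraphs of s₀-sets are K'-free, apply IH to them
    have hFS : ∀ S ∈ (Finset.univ : Finset (Fin n)).powersetCard s₀,
        ((((Finset.univ : Finset (Fin n)).powersetCard (r+1)).filter
            (fun f => S ⊆ Nbr H f)).card : ℝ) ≤ C' * (n:ℝ) ^ Y := by
      intro S hS
      have h1 := aux_free H s hs hfree S (Finset.mem_powersetCard.mp hS).2
      have h2 := hIH n _ (fun f hf =>
        (Finset.mem_powersetCard.mp (Finset.mem_filter.mp hf).1).2) h1
      rw [hYdef, ht''def]
      exact h2
    -- double counting: the sum of binomials of degrees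
    have hPsum : (∑ f ∈ (Finset.univ : Finset (Fin n)).powersetCard (r+1),
        ((Nbr H f).card.choose s₀ : ℝ)) ≤ (n:ℝ)^(s₀:ℕ) * (C' * (n:ℝ)^Y) := by
      have hdc := aux_double (Nbr H) ((Finset.univ : Finset (Fin n)).powersetCard (r+1)) s₀
      have hdc' : (∑ f ∈ (Finset.univ : Finset (Fin n)).powersetCard (r+1),
          ((Nbr H f).card.choose s₀ : ℝ))
          = ∑ S ∈ (Finset.univ : Finset (Fin n)).powersetCard s₀,
            ((((Finset.univ : Finset (Fin n)).powersetCard (r+1)).filter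
              (fun f => S ⊆ Nbr H f)).card : ℝ) := by
        exact_mod_cast congrArg (fun z : ℕ => (z:ℝ)) hdc.symm
      rw [hdc']
      calc ∑ S ∈ (Finset.univ : Finset (Fin n)).powersetCard s₀,
            ((((Finset.univ : Finset (Fin n)).powersetCard (r+1)).filter
              (fun f => S ⊆ Nbr H f)).card : ℝ)
          ≤ ∑ S ∈ (Finset.univ : Finset (Fin n)).powersetCard s₀, C' * (n:ℝ)^Y :=
            Finset.sum_le_sum hFS
        _ = (((Finset.univ : Finset (Fin n)).powersetCard s₀).card : ℝ) * (C' * (n:ℝ)^Y) := by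
            rw [Finset.sum_const, nsmul_eq_mul]
        _ ≤ (n:ℝ)^(s₀:ℕ) * (C' * (n:ℝ)^Y) := by
            have : (((Finset.univ : Finset (Fin n)).powersetCard s₀).card : ℝ) ≤ (n:ℝ)^(s₀:ℕ) := by
              rw [Finset.card_powersetCard, Finset.card_univ, Fintype.card_fin]
              exact_mod_cast Nat.choose_le_pow n s₀
            exact mul_le_mul_of_nonneg_right this (by positivity)
    -- degree sum
    have hDsum : (∑ f ∈ (Finset.univ : Finset (Fin n)).powersetCard (r+1),
        ((Nbr H f).card : ℝ)) = ((r:ℝ)+2) * H.card := by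
      have h := aux_degree_sum' (r := r+1) H huni
      exact_mod_cast congrArg (fun z : ℕ => (z:ℝ)) h
    have hMcard1 : 1 ≤ ((Finset.univ : Finset (Fin n)).powersetCard (r+1)).card := by
      rw [Finset.card_powersetCard, Finset.card_univ, Fintype.card_fin]
      exact Nat.choose_pos (by omega)
    -- power mean
    have hPM : (((r:ℝ)+2) * (H.card:ℝ)) ^ (s₀:ℕ)
        ≤ ((((Finset.univ : Finset (Fin n)).powersetCard (r+1)).card : ℝ))^q
          * ∑ f ∈ (Finset.univ : Finset (Fin n)).powersetCard (r+1), ((Nbr H f).card:ℝ)^(s₀:ℕ) := by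
      have hpm := pow_sum_div_card_le_sum_pow
        (s := (Finset.univ : Finset (Fin n)).powersetCard (r+1))
        (f := fun f => ((Nbr H f).card:ℝ)) (fun i _ => by positivity) q
      rw [← hDsum, hq]
      have hMq : (0:ℝ) < ((((Finset.univ : Finset (Fin n)).powersetCard (r+1)).card : ℝ))^q := by
        have : (0:ℝ) < (((Finset.univ : Finset (Fin n)).powersetCard (r+1)).card : ℝ) := by
          exact_mod_cast hMcard1
        positivity
      rw [mul_comm]
      exact (div_le_iff₀ hMq).mp hpm
    -- pointwise bound on powers of degrees
    have hptw : (∑ f ∈ (Finset.univ : Finset (Fin n)).powersetCard (r+1), ((Nbr H f).card:ℝ)^(s₀:ℕ))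
        ≤ 2^(s₀:ℕ) * (s₀.factorial:ℝ)
            * (∑ f ∈ (Finset.univ : Finset (Fin n)).powersetCard (r+1),
                ((Nbr H f).card.choose s₀ : ℝ))
          + K2 * (((Finset.univ : Finset (Fin n)).powersetCard (r+1)).card : ℝ) := by
      calc ∑ f ∈ (Finset.univ : Finset (Fin n)).powersetCard (r+1), ((Nbr H f).card:ℝ)^(s₀:ℕ)
          ≤ ∑ f ∈ (Finset.univ : Finset (Fin n)).powersetCard (r+1),
              (2^(s₀:ℕ) * ((s₀.factorial:ℝ) * ((Nbr H f).card.choose s₀:ℝ)) + K2) := by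
            refine Finset.sum_le_sum fun f _ => ?_
            rw [hK2]
            exact_mod_cast aux_pow_le_choose (Nbr H f).card s₀
        _ = _ := by
            rw [Finset.sum_add_distrib, Finset.sum_const, nsmul_eq_mul, ← Finset.mul_sum,
              ← Finset.mul_sum]
            ring
    -- size of the (r+1)-set family
    have hMle : ((((Finset.univ : Finset (Fin n)).powersetCard (r+1)).card : ℕ) : ℝ)
        ≤ (n:ℝ)^(r+1) := by
      rw [Finset.card_powersetCard, Finset.card_univ, Fintype.card_fin]
      exact_mod_cast Nat.choose_le_pow n (r+1)
    -- exponent computations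
    have hsX : (s₀:ℝ) * X = (s₀:ℝ)*((r:ℝ)+2) - 1/t'' := by
      rw [hXdef, hT]
      have hs₀ne : ((s₀:ℝ)) ≠ 0 := by positivity
      field_simp
      ring
    have h1t : 1/t'' ≤ (1:ℝ) := (div_le_one ht''pos).mpr ht''1
    have hE1 : ((((r+1)*q + s₀ : ℕ)):ℝ) + Y = (s₀:ℝ) * X := by
      rw [hsX, hYdef]
      push_cast [hq]
      ring
    have hE2 : ((((r+1)*q + (r+1) : ℕ)):ℝ) ≤ (s₀:ℝ) * X := by
      rw [hsX]
      push_cast [hq]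
      nlinarith [h1t, Nat.cast_nonneg (α := ℝ) q, Nat.cast_nonneg (α := ℝ) r]
    -- main chain
    have hchain : ((H.card:ℝ))^(s₀:ℕ) ≤ (K1+K2) * ((n:ℝ) ^ ((s₀:ℝ) * X)) := by
      calc ((H.card:ℝ))^(s₀:ℕ)
          ≤ (((r:ℝ)+2) * (H.card:ℝ)) ^ (s₀:ℕ) := by
            apply pow_le_pow_left₀ (Nat.cast_nonneg _)
            nlinarith [Nat.cast_nonneg (α := ℝ) H.card, Nat.cast_nonneg (α := ℝ) r]
        _ ≤ ((((Finset.univ : Finset (Fin n)).powersetCard (r+1)).card : ℝ))^q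
              * ∑ f ∈ (Finset.univ : Finset (Fin n)).powersetCard (r+1),
                ((Nbr H f).card:ℝ)^(s₀:ℕ) := hPM
        _ ≤ ((((Finset.univ : Finset (Fin n)).powersetCard (r+1)).card : ℝ))^q
              * (2^(s₀:ℕ) * (s₀.factorial:ℝ)
                  * (∑ f ∈ (Finset.univ : Finset (Fin n)).powersetCard (r+1),
                      ((Nbr H f).card.choose s₀ : ℝ))
                + K2 * (((Finset.univ : Finset (Fin n)).powersetCard (r+1)).card : ℝ)) :=
            mul_le_mul_of_nonneg_left hptw (by positivity)
        _ ≤ ((n:ℝ)^(r+1))^q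
              * (2^(s₀:ℕ) * (s₀.factorial:ℝ) * ((n:ℝ)^(s₀:ℕ) * (C' * (n:ℝ)^Y))
                + K2 * (n:ℝ)^(r+1)) := by
            have hsum_nonneg : (0:ℝ) ≤ ∑ f ∈ (Finset.univ : Finset (Fin n)).powersetCard (r+1),
                ((Nbr H f).card.choose s₀ : ℝ) := Finset.sum_nonneg fun f _ => by positivity
            gcongr <;> first | exact hMle | exact hPsum | positivity
        _ = K1 * ((n:ℝ)^(((r+1)*q + s₀ : ℕ)) * (n:ℝ)^Y)
              + K2 * (n:ℝ)^(((r+1)*q + (r+1) : ℕ)) := by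
            rw [hK1, ← pow_mul, pow_add, pow_add]
            ring
        _ = K1 * (n:ℝ)^(((((r+1)*q + s₀ : ℕ)):ℝ) + Y)
              + K2 * (n:ℝ)^(((((r+1)*q + (r+1) : ℕ)):ℝ)) := by
            rw [Real.rpow_add hnpos, Real.rpow_natCast, Real.rpow_natCast]
        _ ≤ K1 * (n:ℝ)^((s₀:ℝ) * X) + K2 * (n:ℝ)^((s₀:ℝ) * X) := by
            rw [hE1]
            have := Real.rpow_le_rpow_of_exponent_le hn1 hE2
            have hK1nn : (0:ℝ) ≤ K1 := hK1pos.le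
            gcongr
        _ = (K1+K2) * (n:ℝ)^((s₀:ℝ) * X) := by ring
    -- conclude
    have hrw : (n:ℝ)^((s₀:ℝ) * X) = ((n:ℝ)^X)^(s₀:ℕ) := by
      rw [mul_comm, Real.rpow_mul hnpos.le, Real.rpow_natCast]
    have hKC : K1 + K2 ≤ C^(s₀:ℕ) :=
      le_trans (le_max_right 1 _) (le_self_pow₀ hC1 (by omega))
    have final : ((H.card:ℝ))^(s₀:ℕ) ≤ (C * (n:ℝ)^X)^(s₀:ℕ) := by
      rw [mul_pow]
      calc ((H.card:ℝ))^(s₀:ℕ) ≤ (K1+K2) * ((n:ℝ)^((s₀:ℝ)*X)) := hchain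
        _ = (K1+K2) * ((n:ℝ)^X)^(s₀:ℕ) := by rw [hrw]
        _ ≤ C^(s₀:ℕ) * ((n:ℝ)^X)^(s₀:ℕ) := by
            have : (0:ℝ) ≤ ((n:ℝ)^X)^(s₀:ℕ) := by positivity
            exact mul_le_mul_of_nonneg_right hKC this
    have hXeq : (((r+1 : ℕ) : ℝ) + 1) - 1/T = X := by rw [hXdef]; push_cast; ring
    rw [hXeq]
    exact (pow_le_pow_iff_left₀ (Nat.cast_nonneg _) (by positivity) (by omega)).mp final


/-- Erdős (1964): an `n`-vertex `K^{(r)}_{s_1,…,s_r}`-free `r`-uniform hypergraph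
(`r = m+1 ≥ 2`, `s_1 ≤ ⋯ ≤ s_r`) has at most `C · n^{r - 1/(s_1⋯s_{r-1})}` edges. -/
theorem erdos_complete_partite_free_edge_bound
    (m : ℕ) (hm : 1 ≤ m) (s : Fin (m + 1) → ℕ) (hs : ∀ i, 0 < s i)
    (hmono : Monotone s) :
    ∃ C : ℝ, 0 < C ∧ ∀ n : ℕ, ∀ H : Finset (Finset (Fin n)),
      (∀ e ∈ H, e.card = m + 1) → ¬ ContainsCompletePartite H s →
      (H.card : ℝ) ≤ C * (n : ℝ) ^
        ((m + 1 : ℝ) - 1 / ∏ i : Fin m, (s i.castSucc : ℝ)) := by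
  exact erdos_aux m s hs
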